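/- arXiv:2305.05637 — 2 statements merged into one kernel-verified Lean document; each statement's English description precedes it below -/
import Mathlib

section
/- Let C ⊆ (𝕋ⁿ)² be a closed monotone pre-congruence. Then the signed part C^∨ of C (the set of signed pairs belonging to C) is a signed bend cone. -/
/-- The tropical (max-plus) semiring 𝕋 = ℝ ∪ {−∞}, modeled as `WithBot ℝ`. -/
abbrev Trop : Type := WithBot ℝ

/-- The map 𝕋 → ℝ, x ↦ eˣ (with e^{−∞} = 0), inducing the metric
d(x,y) = |eˣ − e^y| on 𝕋. -/
noncomputable def tropExp : Trop → ℝ := WithBot.recBotCoe (0 : ℝ) Real.exp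

/-- The topology on 𝕋 induced by the metric d(x,y) = |eˣ − e^y|. -/
noncomputable instance : TopologicalSpace Trop :=
  TopologicalSpace.induced tropExp inferInstance

/-- A pair of vectors (x⁺, x⁻) ∈ (𝕋ⁿ)² is signed if, for every coordinate i,
x⁺_i = −∞ or x⁻_i = −∞. -/
def SignedVecPair {n : ℕ} (x : (Fin n → Trop) × (Fin n → Trop)) : Prop :=
  ∀ i, x.1 i = ⊥ ∨ x.2 i = ⊥

/-- Tropical scalar product of vectors: ⟨x,y⟩ = max_i (x_i + y_i). -/
noncomputable def tdot {n : ℕ} (x y : Fin n → Trop) : Trop :=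
  Finset.univ.sup fun i => x i + y i

/-- The "signed part" f^∨ of a pair of vectors f = (f⁺, f⁻):
f^{∨+}_i = f⁺_i if f⁺_i ≥ f⁻_i and −∞ otherwise;
f^{∨−}_i = f⁻_i if f⁻_i > f⁺_i and −∞ otherwise. -/
noncomputable def vee {n : ℕ} (f : (Fin n → Trop) × (Fin n → Trop)) :
    (Fin n → Trop) × (Fin n → Trop) :=
  (fun i => if f.2 i ≤ f.1 i then f.1 i else ⊥,
   fun i => if f.1 i < f.2 i then f.2 i else ⊥)

/-- Tropical scalar action: (λ ⊙ f)_i = λ + f_i. -/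
noncomputable def tsmul {n : ℕ} (l : Trop) (f : Fin n → Trop) : Fin n → Trop :=
  fun i => l + f i

/-- A monotone pre-congruence C ⊆ (𝕋ⁿ)²: stable by tropical scalar multiplication,
by componentwise max, by "transitivity" (f⁻ = g⁺ implies (f⁺,g⁻) ∈ C), and containing
every pair (f⁺,f⁻) with f⁺ ≥ f⁻. -/
structure IsMonotonePrecongruence {n : ℕ} (C : Set ((Fin n → Trop) × (Fin n → Trop))) : Prop where
  smul_mem : ∀ f ∈ C, ∀ l : Trop, (tsmul l f.1, tsmul l f.2) ∈ C
  add_mem : ∀ f ∈ C, ∀ g ∈ C, (f.1 ⊔ g.1, f.2 ⊔ g.2) ∈ C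
  trans_mem : ∀ f ∈ C, ∀ g ∈ C, f.2 = g.1 → (f.1, g.2) ∈ C
  monotone_mem : ∀ f : (Fin n → Trop) × (Fin n → Trop), f.2 ≤ f.1 → f ∈ C

/-- The pair x ⊕_i y = (x⁺ ⊕ y⁺_{∖i}, x⁻_{∖i} ⊕ y⁻), where z_{∖i} is z with
coordinate i replaced by −∞. -/
noncomputable def oplusI {n : ℕ} (i : Fin n)
    (x y : (Fin n → Trop) × (Fin n → Trop)) : (Fin n → Trop) × (Fin n → Trop) :=
  (x.1 ⊔ Function.update y.1 i ⊥, Function.update x.2 i ⊥ ⊔ y.2)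

/-- A signed bend cone R ⊆ (𝕋ⁿ)²: all elements are signed pairs, R contains all
pairs (x⁺, −∞), is stable by tropical scalar multiplication, and is stable under
the operations x, y ↦ (x ⊕ y)^∨ and x, y ↦ (x ⊕_i y)^∨ (the latter when x⁻_i = y⁺_i). -/
structure IsSignedBendCone {n : ℕ} (R : Set ((Fin n → Trop) × (Fin n → Trop))) : Prop where
  signed : ∀ x ∈ R, SignedVecPair x
  pos_mem : ∀ xp : Fin n → Trop, (xp, fun _ => (⊥ : Trop)) ∈ R
  smul_mem : ∀ x ∈ R, ∀ l : Trop, (tsmul l x.1, tsmul l x.2) ∈ R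
  add_vee_mem : ∀ x ∈ R, ∀ y ∈ R, vee (x.1 ⊔ y.1, x.2 ⊔ y.2) ∈ R
  addI_vee_mem : ∀ x ∈ R, ∀ y ∈ R, ∀ i : Fin n, x.2 i = y.1 i → vee (oplusI i x y) ∈ R

/-- The one-sided polar B^⊲ = {a ∈ 𝕋ⁿ : ⟨x⁺,a⟩ ≥ ⟨x⁻,a⟩ for all (x⁺,x⁻) ∈ B}. -/
def onePolar {n : ℕ} (B : Set ((Fin n → Trop) × (Fin n → Trop))) : Set (Fin n → Trop) :=
  {a | ∀ x ∈ B, tdot x.2 a ≤ tdot x.1 a}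

/-- The signed part C^∨ of a set C ⊆ (𝕋ⁿ)²: the signed pairs belonging to C. -/
def signedPart {n : ℕ} (C : Set ((Fin n → Trop) × (Fin n → Trop))) :
    Set ((Fin n → Trop) × (Fin n → Trop)) :=
  {x ∈ C | SignedVecPair x}

/-- The signed polar A° of A ⊆ 𝕋ⁿ : the set of signed pairs (x⁺,x⁻) with
⟨x⁺,a⟩ ≥ ⟨x⁻,a⟩ for all a ∈ A. -/
def signedPolar {n : ℕ} (A : Set (Fin n → Trop)) :
    Set ((Fin n → Trop) × (Fin n → Trop)) :=
  {x | SignedVecPair x ∧ ∀ a ∈ A, tdot x.2 a ≤ tdot x.1 a}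

section SPAux

open Filter Topology

lemma spTropExp_bot : tropExp ⊥ = 0 := rfl
lemma spTropExp_coe (r : ℝ) : tropExp ↑r = Real.exp r := rfl

lemma spTropExp_nonneg (x : Trop) : 0 ≤ tropExp x := by
  induction x using WithBot.recBotCoe with
  | bot => exact le_refl 0
  | coe r => exact (Real.exp_pos r).le

lemma spTropExp_mono : Monotone tropExp := by
  intro u v h
  induction u using WithBot.recBotCoe with
  | bot => exact spTropExp_nonneg v
  | coe r =>
    induction v using WithBot.recBotCoe with
    | bot => exact absurd h (by simp)
    | coe s => exact Real.exp_le_exp.2 (by exact_mod_cast h)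

lemma spTropExp_sup (u v : Trop) : tropExp (u ⊔ v) = max (tropExp u) (tropExp v) :=
  spTropExp_mono.map_max

lemma spTropExp_coe_add (r : ℝ) (v : Trop) : tropExp (↑r + v) = Real.exp r * tropExp v := by
  induction v using WithBot.recBotCoe with
  | bot => simp [spTropExp_bot]
  | coe s => rw [← WithBot.coe_add, spTropExp_coe, spTropExp_coe, Real.exp_add]

lemma spTendsto_trop {α : Type*} {l : Filter α} {u : α → Trop} {x : Trop} :
    Tendsto u l (𝓝 x) ↔ Tendsto (fun k => tropExp (u k)) l (𝓝 (tropExp x)) := by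
  rw [show (𝓝 x) = Filter.comap tropExp (𝓝 (tropExp x)) from nhds_induced tropExp x,
    Filter.tendsto_comap_iff]
  rfl

lemma spTsmul_le_self {n : ℕ} {r : ℝ} (hr : r ≤ 0) (a : Fin n → Trop) : tsmul ↑r a ≤ a := by
  intro i
  show (↑r + a i : Trop) ≤ a i
  induction a i using WithBot.recBotCoe with
  | bot => simp
  | coe s =>
    rw [← WithBot.coe_add, WithBot.coe_le_coe]
    linarith

lemma spTsmul_sup {n : ℕ} (l : Trop) (x y : Fin n → Trop) :
    tsmul l (x ⊔ y) = tsmul l x ⊔ tsmul l y := by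
  funext i
  show l + (x i ⊔ y i) = (l + x i) ⊔ (l + y i)
  exact (add_right_mono (α := Trop) (a := l)).map_max

lemma spTsmul_tsmul {n : ℕ} (l m : Trop) (a : Fin n → Trop) :
    tsmul l (tsmul m a) = tsmul (l + m) a := by
  funext i
  show l + (m + a i) = (l + m) + a i
  rw [add_assoc]

lemma spExists_delta {n : ℕ} (f : (Fin n → Trop) × (Fin n → Trop)) :
    ∃ δ : ℝ, 0 < δ ∧ ∀ i, f.1 i < f.2 i → f.1 i + ↑δ ≤ f.2 i := by
  have h : ∀ i, ∀ᶠ (δ : ℝ) in 𝓝[>] (0:ℝ), f.1 i < f.2 i → f.1 i + ↑δ ≤ f.2 i := by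
    intro i
    induction f.1 i using WithBot.recBotCoe with
    | bot => exact Eventually.of_forall fun δ _ => by simp
    | coe r =>
      induction f.2 i using WithBot.recBotCoe with
      | bot => exact Eventually.of_forall fun δ h => absurd h (by simp)
      | coe s =>
        by_cases hrs : r < s
        · have hIoc : Set.Ioc (0:ℝ) (s - r) ∈ 𝓝[>] (0:ℝ) :=
            Ioc_mem_nhdsGT_of_mem ⟨le_refl 0, by linarith⟩
          filter_upwards [hIoc] with δ hδ _
          rw [← WithBot.coe_add, WithBot.coe_le_coe]
          linarith [hδ.2]
        · exact Eventually.of_forall fun δ h => absurd (by exact_mod_cast h) hrs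
  have hall : ∀ᶠ (δ : ℝ) in 𝓝[>] (0:ℝ), ∀ i, f.1 i < f.2 i → f.1 i + ↑δ ≤ f.2 i :=
    Filter.eventually_all.2 h
  have hpos : ∀ᶠ (δ : ℝ) in 𝓝[>] (0:ℝ), 0 < δ := eventually_mem_nhdsWithin
  exact (hpos.and hall).exists

variable {n : ℕ} {C : Set ((Fin n → Trop) × (Fin n → Trop))}

lemma spIterate (hC : IsMonotonePrecongruence C) (hclosed : IsClosed C)
    (a b : Fin n → Trop) {δ : ℝ} (hδ : 0 < δ)
    (H : (a ⊔ tsmul ↑(-δ) b, b) ∈ C) : (a, b) ∈ C := by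
  -- step: for all k, (a ⊔ tsmul (-(k+1)δ) b, b) ∈ C
  have key : ∀ k : ℕ, (a ⊔ tsmul ↑(-((k+1 : ℝ) * δ)) b, b) ∈ C := by
    intro k
    induction k with
    | zero => simpa using H
    | succ k ih =>
      have hscale := hC.smul_mem _ H (↑(-((k+1 : ℝ) * δ)) : Trop)
      rw [spTsmul_sup, spTsmul_tsmul, ← WithBot.coe_add] at hscale
      have hcoe : (-((k+1 : ℝ) * δ) + -δ) = -(((k:ℝ)+1+1) * δ) := by ring
      rw [hcoe] at hscale
      have hmono : ((a, a) : (Fin n → Trop) × (Fin n → Trop)) ∈ C :=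
        hC.monotone_mem (a, a) le_rfl
      have hsup := hC.add_mem _ hmono _ hscale
      simp only at hsup
      have hleft : a ⊔ (tsmul ↑(-((k+1 : ℝ) * δ)) a ⊔ tsmul ↑(-(((k:ℝ)+1+1) * δ)) b)
          = a ⊔ tsmul ↑(-(((k:ℝ)+1+1) * δ)) b := by
        rw [← sup_assoc, sup_eq_left.2 (spTsmul_le_self (by nlinarith [Nat.cast_nonneg (α := ℝ) k]) a)]
      rw [hleft] at hsup
      have := hC.trans_mem _ hsup _ ih rfl
      convert this using 4
      push_cast
      ring_nf
  -- limit
  have hlim : Tendsto (fun k : ℕ => ((a ⊔ tsmul ↑(-((k+1 : ℝ) * δ)) b, b) :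
      (Fin n → Trop) × (Fin n → Trop))) atTop (𝓝 (a, b)) := by
    refine Tendsto.prodMk_nhds ?_ tendsto_const_nhds
    rw [tendsto_pi_nhds]
    intro i
    rw [spTendsto_trop]
    have heq : ∀ k : ℕ, tropExp ((a ⊔ tsmul ↑(-((k+1 : ℝ) * δ)) b) i)
        = max (tropExp (a i)) (Real.exp (-((k+1 : ℝ) * δ)) * tropExp (b i)) := by
      intro k
      show tropExp (a i ⊔ (↑(-((k+1 : ℝ) * δ)) + b i)) = _
      rw [spTropExp_sup, spTropExp_coe_add]
    simp only [heq]
    have h1 : Tendsto (fun k : ℕ => Real.exp (-((k+1 : ℝ) * δ)) * tropExp (b i)) atTop (𝓝 0) := by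
      have h2 : Tendsto (fun k : ℕ => -((k+1 : ℝ) * δ)) atTop atBot := by
        apply Filter.tendsto_neg_atTop_atBot.comp
        apply Tendsto.atTop_mul_const hδ
        exact tendsto_atTop_add_const_right _ 1 tendsto_natCast_atTop_atTop
      simpa using (Real.tendsto_exp_atBot.comp h2).mul_const (tropExp (b i))
    have := (tendsto_const_nhds (x := tropExp (a i)) (f := atTop (α := ℕ))).max h1
    rwa [max_eq_left (spTropExp_nonneg _)] at this
  exact hclosed.mem_of_tendsto hlim (Eventually.of_forall key)

lemma spVee_mem (hC : IsMonotonePrecongruence C) (hclosed : IsClosed C)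
    {f : (Fin n → Trop) × (Fin n → Trop)} (hf : f ∈ C) : vee f ∈ C := by
  obtain ⟨δ, hδ, hgap⟩ := spExists_delta f
  set a := (vee f).1 with ha
  set b := (vee f).2 with hb
  have hble : b ≤ f.2 := by
    intro i
    show (if f.1 i < f.2 i then f.2 i else ⊥) ≤ f.2 i
    split <;> simp
  have hfb : (f.1, b) ∈ C :=
    hC.trans_mem f hf (f.2, b) (hC.monotone_mem (f.2, b) hble) rfl
  have hmono : ((a ⊔ tsmul ↑(-δ) b, fun _ => (⊥ : Trop)) :
      (Fin n → Trop) × (Fin n → Trop)) ∈ C :=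
    hC.monotone_mem _ (fun i => bot_le)
  have hsup := hC.add_mem _ hmono _ hfb
  simp only at hsup
  have hf1le : f.1 ≤ a ⊔ tsmul ↑(-δ) b := by
    intro i
    show f.1 i ≤ (a i) ⊔ (↑(-δ) + b i)
    by_cases hi : f.1 i < f.2 i
    · refine le_trans ?_ le_sup_right
      have hbi : b i = f.2 i := if_pos hi
      rw [hbi]
      have hg := hgap i hi
      have hz : ((↑δ : Trop) + ↑(-δ)) = 0 := by
        rw [← WithBot.coe_add]
        norm_num
      calc f.1 i = (f.1 i + ↑δ) + ↑(-δ) := by rw [add_assoc, hz, add_zero]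
        _ ≤ f.2 i + ↑(-δ) := add_le_add_left hg _
        _ = ↑(-δ) + f.2 i := add_comm _ _
    · have hai : a i = f.1 i := if_pos (not_lt.1 hi)
      rw [← hai]
      exact le_sup_left
  have hleft : (a ⊔ tsmul ↑(-δ) b) ⊔ f.1 = a ⊔ tsmul ↑(-δ) b := sup_eq_left.2 hf1le
  have hright : (fun _ => (⊥ : Trop)) ⊔ b = b := by
    funext i; exact bot_sup_eq _
  rw [hleft, hright] at hsup
  have := spIterate hC hclosed a b hδ hsup
  rw [ha, hb] at this
  exact this

lemma spVee_signed {n : ℕ} (f : (Fin n → Trop) × (Fin n → Trop)) : SignedVecPair (vee f) := by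
  intro i
  by_cases h : f.1 i < f.2 i
  · left; exact if_neg (not_le.2 h)
  · right; exact if_neg h

end SPAux

/-- The signed part of a closed monotone pre-congruence is a signed bend cone. -/
theorem signedPart_isSignedBendCone {n : ℕ}
    (C : Set ((Fin n → Trop) × (Fin n → Trop)))
    (hC : IsMonotonePrecongruence C) (hclosed : IsClosed C) :
    IsSignedBendCone (signedPart C) := by
  constructor
  · exact fun x hx => hx.2
  · intro xp
    exact ⟨hC.monotone_mem _ (fun i => bot_le), fun i => Or.inr rfl⟩
  · intro x hx l
    refine ⟨hC.smul_mem x hx.1 l, fun i => ?_⟩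
    rcases hx.2 i with h | h
    · left; show l + x.1 i = ⊥; rw [h, WithBot.add_bot]
    · right; show l + x.2 i = ⊥; rw [h, WithBot.add_bot]
  · intro x hx y hy
    exact ⟨spVee_mem hC hclosed (hC.add_mem x hx.1 y hy.1), spVee_signed _⟩
  · intro x hx y hy i hxy
    have hA : ((x.1 ⊔ Function.update y.1 i ⊥, x.2 ⊔ Function.update y.1 i ⊥) :
        (Fin n → Trop) × (Fin n → Trop)) ∈ C :=
      hC.add_mem x hx.1 (Function.update y.1 i ⊥, Function.update y.1 i ⊥)
        (hC.monotone_mem _ le_rfl)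
    have hB : ((Function.update x.2 i ⊥ ⊔ y.1, Function.update x.2 i ⊥ ⊔ y.2) :
        (Fin n → Trop) × (Fin n → Trop)) ∈ C :=
      hC.add_mem (Function.update x.2 i ⊥, Function.update x.2 i ⊥)
        (hC.monotone_mem _ le_rfl) y hy.1
    have hEq : x.2 ⊔ Function.update y.1 i ⊥ = Function.update x.2 i ⊥ ⊔ y.1 := by
      funext j
      show x.2 j ⊔ Function.update y.1 i ⊥ j = Function.update x.2 i ⊥ j ⊔ y.1 j
      by_cases hj : j = i
      · subst hj
        rw [Function.update_self, Function.update_self, sup_bot_eq, bot_sup_eq, hxy]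
      · rw [Function.update_of_ne hj, Function.update_of_ne hj]
    have := hC.trans_mem _ hA _ hB hEq
    exact ⟨spVee_mem hC hclosed this, spVee_signed _⟩
end

section
/- Let R ⊆ (𝕋ⁿ)² be a signed bend cone and let x, y ∈ R. Then (x ⊕̂ y)^∨ ∈ R, where, with I = {i : x⁻_i = y⁺_i}, one sets x ⊕̂ y = (x⁺ ⊕ y⁺_{\setminus I}, x⁻_{\setminus I} ⊕ y⁻) and z_{\setminus I} denotes z with all coordinates in I replaced by −∞. -/
/-- The pair x ⊕̂ y = (x⁺ ⊕ y⁺_{∖I}, x⁻_{∖I} ⊕ y⁻), where I = {i : x⁻_i = y⁺_i}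
and z_{∖I} is z with all coordinates in I replaced by −∞. -/
noncomputable def hatOplus {n : ℕ} (x y : (Fin n → Trop) × (Fin n → Trop)) :
    (Fin n → Trop) × (Fin n → Trop) :=
  (x.1 ⊔ fun i => if x.2 i = y.1 i then ⊥ else y.1 i,
   (fun i => if x.2 i = y.1 i then ⊥ else x.2 i) ⊔ y.2)

section Aux

variable {n : ℕ}

lemma vee_of_signed (f : (Fin n → Trop) × (Fin n → Trop))
    (hf : SignedVecPair f) : vee f = f := by
  refine Prod.ext (funext fun i => ?_) (funext fun i => ?_)
  · rcases hf i with h | h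
    · simp [vee, h]
    · simp [vee, h]
  · rcases hf i with h | h
    · simp only [vee, h, bot_lt_iff_ne_bot]
      split_ifs with h2
      · rfl
      · push_neg at h2; exact h2.symm
    · simp [vee, h]

/-- Helper: coordinatewise vee. -/
noncomputable def veeP (a b : Trop) : Trop × Trop :=
  (if b ≤ a then a else ⊥, if a < b then b else ⊥)

lemma vee_fst (f : (Fin n → Trop) × (Fin n → Trop)) :
    (vee f).1 = fun i => (veeP (f.1 i) (f.2 i)).1 := rfl

lemma vee_snd (f : (Fin n → Trop) × (Fin n → Trop)) :
    (vee f).2 = fun i => (veeP (f.1 i) (f.2 i)).2 := rfl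

lemma vee_ext {f g : (Fin n → Trop) × (Fin n → Trop)}
    (h : ∀ i, veeP (f.1 i) (f.2 i) = veeP (g.1 i) (g.2 i)) : vee f = vee g := by
  refine Prod.ext (funext fun i => ?_) (funext fun i => ?_)
  · exact congrArg Prod.fst (h i)
  · exact congrArg Prod.snd (h i)

lemma veeP_fst_self (a : Trop) : (veeP a a).1 = a := by simp [veeP]

lemma veeP_snd_self (a : Trop) : (veeP a a).2 = ⊥ := by simp [veeP]

lemma veeP_absorb (p m A B : Trop) (hp : p ≤ A) (hm : m ≤ B) :
    veeP (p ⊔ (veeP A B).1) (m ⊔ (veeP A B).2) = veeP A B := by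
  by_cases h : B ≤ A
  · have h2 : ¬ A < B := not_lt.2 h
    have hmA : m ≤ A := hm.trans h
    simp [veeP, h, h2, sup_eq_right.2 hp, hmA, not_lt.2 hmA]
  · push_neg at h
    have hpB : p < B := lt_of_le_of_lt hp h
    simp [veeP, not_le.2 h, h, sup_eq_right.2 hm, not_le.2 hpB, hpB]

/-- Deleting one coordinate of the negative part keeps membership in a
signed bend cone. -/
lemma delete_neg {R : Set ((Fin n → Trop) × (Fin n → Trop))}
    (hR : IsSignedBendCone R) {x : (Fin n → Trop) × (Fin n → Trop)}
    (hx : x ∈ R) (k : Fin n) :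
    (x.1, Function.update x.2 k ⊥) ∈ R := by
  classical
  set v : (Fin n → Trop) × (Fin n → Trop) :=
    (Function.update (fun _ => (⊥ : Trop)) k (x.2 k), fun _ => (⊥ : Trop)) with hv
  have hvR : v ∈ R := hR.pos_mem _
  have hcond : x.2 k = v.1 k := by simp [hv]
  have h := hR.addI_vee_mem x hx v hvR k hcond
  have he : oplusI k x v = (x.1, Function.update x.2 k ⊥) := by
    refine Prod.ext (funext fun i => ?_) (funext fun i => ?_)
    · simp only [oplusI, Pi.sup_apply, hv]
      by_cases hik : i = k
      · subst hik; simp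
      · simp [Function.update_of_ne hik]
    · simp only [oplusI, Pi.sup_apply, hv]
      simp
  rw [he] at h
  rwa [vee_of_signed] at h
  intro i
  by_cases hik : i = k
  · subst hik; simp
  · simp only [Function.update_of_ne hik]
    exact hR.signed x hx i

lemma delete_neg_finset {R : Set ((Fin n → Trop) × (Fin n → Trop))}
    (hR : IsSignedBendCone R) {x : (Fin n → Trop) × (Fin n → Trop)}
    (hx : x ∈ R) (S : Finset (Fin n)) :
    (x.1, fun i => if i ∈ S then ⊥ else x.2 i) ∈ R := by
  classical
  induction S using Finset.induction_on with
  | empty =>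
      have he : (fun i => if i ∈ (∅ : Finset (Fin n)) then (⊥ : Trop) else x.2 i) = x.2 := by
        funext i; simp
      rw [he]
      exact hx
  | @insert j S hj ih =>
      have h : (x.1, Function.update (fun i => if i ∈ S then (⊥ : Trop) else x.2 i) j ⊥) ∈ R :=
        delete_neg hR ih j
      have he : Function.update (fun i => if i ∈ S then (⊥ : Trop) else x.2 i) j ⊥
          = fun i => if i ∈ insert j S then ⊥ else x.2 i := by
        funext i
        by_cases hik : i = j
        · subst hik; simp
        · simp [Function.update_of_ne hik, hik, Finset.mem_insert]
      rwa [he] at h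

lemma key_lemma {R : Set ((Fin n → Trop) × (Fin n → Trop))}
    (hR : IsSignedBendCone R) {x y : (Fin n → Trop) × (Fin n → Trop)}
    (hx : x ∈ R) (hy : y ∈ R) (S : Finset (Fin n)) :
    (∀ i ∈ S, x.2 i = y.1 i ∧ y.1 i ≠ ⊥) →
    vee (x.1 ⊔ fun i => if i ∈ S then ⊥ else y.1 i,
         (fun i => if i ∈ S then ⊥ else x.2 i) ⊔ y.2) ∈ R := by
  classical
  induction S using Finset.induction_on with
  | empty =>
      intro _
      have h1 : (fun i => if i ∈ (∅ : Finset (Fin n)) then (⊥ : Trop) else y.1 i) = y.1 := by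
        funext i; simp
      have h2 : (fun i => if i ∈ (∅ : Finset (Fin n)) then (⊥ : Trop) else x.2 i) = x.2 := by
        funext i; simp
      rw [h1, h2]
      exact hR.add_vee_mem x hx y hy
  | @insert j S hj ih =>
      intro hS
      obtain ⟨hm, hmbot⟩ := hS j (Finset.mem_insert_self j S)
      have hS' : ∀ i ∈ S, x.2 i = y.1 i ∧ y.1 i ≠ ⊥ :=
        fun i hi => hS i (Finset.mem_insert_of_mem hi)
      set zp : (Fin n → Trop) × (Fin n → Trop) :=
        (x.1 ⊔ fun i => if i ∈ S then ⊥ else y.1 i,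
         (fun i => if i ∈ S then ⊥ else x.2 i) ⊔ y.2) with hzp
      have hz : vee zp ∈ R := ih hS'
      set u : (Fin n → Trop) × (Fin n → Trop) :=
        (x.1, fun i => if i ∈ S then ⊥ else x.2 i) with hu
      have huR : u ∈ R := delete_neg_finset hR hx S
      -- signedness facts at j
      have hx2j : x.2 j ≠ ⊥ := by rw [hm]; exact hmbot
      have hx1j : x.1 j = ⊥ := (hR.signed x hx j).resolve_right hx2j
      have hy2j : y.2 j = ⊥ := (hR.signed y hy j).resolve_left hmbot
      have hzp1j : zp.1 j = y.1 j := by simp [hzp, hj, hx1j]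
      have hzp2j : zp.2 j = y.1 j := by simp [hzp, hj, hy2j, hm]
      have hcond : u.2 j = (vee zp).1 j := by
        have h1 : (vee zp).1 j = (veeP (zp.1 j) (zp.2 j)).1 := rfl
        rw [h1, hzp1j, hzp2j, veeP_fst_self]
        simp only [hu]
        simp [hj, hm]
      have h := hR.addI_vee_mem u huR (vee zp) hz j hcond
      have he : vee (oplusI j u (vee zp)) =
          vee (x.1 ⊔ fun i => if i ∈ insert j S then ⊥ else y.1 i,
               (fun i => if i ∈ insert j S then ⊥ else x.2 i) ⊔ y.2) := by
        apply vee_ext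
        intro i
        simp only [oplusI, Pi.sup_apply, Function.update_apply, vee_fst, vee_snd, hu, hzp]
        by_cases hij : i = j
        · subst hij
          simp [hj, hx1j, hy2j, hm, veeP_snd_self, Finset.mem_insert]
        · by_cases hiS : i ∈ S
          · obtain ⟨hmi, hmboti⟩ := hS' i hiS
            have hx2i : x.2 i ≠ ⊥ := by rw [hmi]; exact hmboti
            have hx1i : x.1 i = ⊥ := (hR.signed x hx i).resolve_right hx2i
            have hy2i : y.2 i = ⊥ := (hR.signed y hy i).resolve_left hmboti
            have hiI : i ∈ insert j S := Finset.mem_insert_of_mem hiS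
            simp [veeP_fst_self, veeP_snd_self, hij, hiS, hiI, hx1i, hy2i]
          · have hiI : i ∉ insert j S := by simp [Finset.mem_insert, hij, hiS]
            simp only [if_neg hij, if_neg hiS, if_neg hiI]
            exact veeP_absorb (x.1 i) (x.2 i) (x.1 i ⊔ y.1 i) (x.2 i ⊔ y.2 i)
              le_sup_left le_sup_left
      rw [he] at h
      exact h

end Aux

/-- A signed bend cone is stable under the operation x, y ↦ (x ⊕̂ y)^∨. -/
theorem signedBendCone_hatOplus_mem {n : ℕ}
    (R : Set ((Fin n → Trop) × (Fin n → Trop))) (hR : IsSignedBendCone R)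
    (x y : (Fin n → Trop) × (Fin n → Trop)) (hx : x ∈ R) (hy : y ∈ R) :
    vee (hatOplus x y) ∈ R := by
  classical
  set S : Finset (Fin n) :=
    Finset.univ.filter (fun i => x.2 i = y.1 i ∧ y.1 i ≠ ⊥) with hSdef
  have hmem : ∀ i, i ∈ S ↔ (x.2 i = y.1 i ∧ y.1 i ≠ ⊥) := by
    intro i; simp [hSdef, Finset.mem_filter]
  have hS : ∀ i ∈ S, x.2 i = y.1 i ∧ y.1 i ≠ ⊥ := fun i hi => (hmem i).1 hi
  have h := key_lemma hR hx hy S hS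
  have he : hatOplus x y =
      (x.1 ⊔ fun i => if i ∈ S then ⊥ else y.1 i,
       (fun i => if i ∈ S then ⊥ else x.2 i) ⊔ y.2) := by
    refine Prod.ext (funext fun i => ?_) (funext fun i => ?_) <;>
    · simp only [hatOplus, Pi.sup_apply, hmem i]
      by_cases h1 : x.2 i = y.1 i
      · by_cases h2 : y.1 i = ⊥
        · simp [h1, h2]
        · simp [h1, h2]
      · simp [h1]
  rw [he]
  exact h
end
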